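/- For the complete multipartite graph K_{p,q,r} with p,q,r ≥ 1, the integer matrix obtained from the generalized distance matrix by setting all variables equal to 2 has Smith normal form diag(1,1,4,0,...,0); in particular, its rank is 3 and Δ_3 = 4. -/

import Mathlib

open Function

/-- `d` is a gcd of the `k×k` minors of the square integer matrix `M`. -/
def IsMinorGcd {V : Type*} [Fintype V] [DecidableEq V] (k : ℕ)
    (M : Matrix V V ℤ) (d : ℤ) : Prop :=
  (∀ r c : Fin k → V, Injective r → Injective c → d ∣ (M.submatrix r c).det) ∧
  (∀ e : ℤ, (∀ r c : Fin k → V, Injective r → Injective c →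
      e ∣ (M.submatrix r c).det) → e ∣ d)

/-- The part of a vertex of the tripartite vertex set. -/
def part3 {p q r : ℕ} : (Fin p ⊕ Fin q ⊕ Fin r) → Fin 3 :=
  Sum.elim (fun _ => 0) (Sum.elim (fun _ => 1) (fun _ => 2))

/-- `2·I + D(K_{p,q,r})`, the generalized distance matrix of the complete tripartite
graph with all variables set to `2`: entries are `2` within a part (including the
diagonal) and `1` across parts. -/
def evalDistTripartite (p q r : ℕ) :
    Matrix (Fin p ⊕ Fin q ⊕ Fin r) (Fin p ⊕ Fin q ⊕ Fin r) ℤ :=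
  Matrix.of fun u v => if part3 u = part3 v then 2 else 1

private def Amat : Matrix (Fin 3) (Fin 3) ℤ := Matrix.of fun i j => if i = j then 2 else 1

lemma key3 : ∀ f g : Fin 3 → Fin 3, (4:ℤ) ∣ (Amat.submatrix f g).det := by decide

lemma detAmat : Amat.det = 4 := by decide

/-- For `K_{p,q,r}` with `p,q,r ≥ 1`, the matrix `2·I + D(K_{p,q,r})` has Smith normal
form `diag(1,1,4,0,…,0)`: `Δ₁ = 1`, `Δ₂ = 1`, `Δ₃ = 4`, and all `4×4` minors vanish. -/
theorem snf_tripartite_evaluated (p q r : ℕ) (hp : 1 ≤ p) (hq : 1 ≤ q) (hr : 1 ≤ r) :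
    IsMinorGcd 1 (evalDistTripartite p q r) 1 ∧
    IsMinorGcd 2 (evalDistTripartite p q r) 1 ∧
    IsMinorGcd 3 (evalDistTripartite p q r) 4 ∧
    (∀ rr cc : Fin 4 → Fin p ⊕ Fin q ⊕ Fin r, Injective rr → Injective cc →
      ((evalDistTripartite p q r).submatrix rr cc).det = 0) := by
  have hsub : ∀ {k : ℕ} (rr cc : Fin k → Fin p ⊕ Fin q ⊕ Fin r),
      (evalDistTripartite p q r).submatrix rr cc
        = Amat.submatrix (part3 ∘ rr) (part3 ∘ cc) := fun _ _ => rfl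
  set u0 : Fin p ⊕ Fin q ⊕ Fin r := Sum.inl ⟨0, hp⟩ with hu0
  set u1 : Fin p ⊕ Fin q ⊕ Fin r := Sum.inr (Sum.inl ⟨0, hq⟩) with hu1
  set u2 : Fin p ⊕ Fin q ⊕ Fin r := Sum.inr (Sum.inr ⟨0, hr⟩) with hu2
  refine ⟨⟨fun _ _ _ _ => one_dvd _, fun e he => ?_⟩,
          ⟨fun _ _ _ _ => one_dvd _, fun e he => ?_⟩,
          ⟨fun rr cc _ _ => ?_, fun e he => ?_⟩, fun rr cc hrr hcc => ?_⟩
  · have h := he ![u0] ![u1] (fun a b _ => Subsingleton.elim a b)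
      (fun a b _ => Subsingleton.elim a b)
    rw [Matrix.det_fin_one] at h
    simpa [Matrix.det_fin_one, evalDistTripartite, part3, hu0, hu1] using h
  · have hri : Injective ![u0, u1] := by
      have h2 : part3 ∘ ![u0, u1] = ![0, 1] := by funext i; fin_cases i <;> rfl
      have : Injective (part3 ∘ ![u0, u1]) := by rw [h2]; decide
      exact Injective.of_comp this
    have hci : Injective ![u1, u2] := by
      have h2 : part3 ∘ ![u1, u2] = ![1, 2] := by funext i; fin_cases i <;> rfl
      have : Injective (part3 ∘ ![u1, u2]) := by rw [h2]; decide
      exact Injective.of_comp this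
    have h := he ![u0, u1] ![u1, u2] hri hci
    have hdet : ((evalDistTripartite p q r).submatrix ![u0, u1] ![u1, u2]).det = -1 := by
      rw [Matrix.det_fin_two]
      simp [Matrix.det_fin_two, evalDistTripartite, part3, hu0, hu1, hu2]
    rw [hdet] at h
    exact (dvd_neg).mp h
  · rw [hsub rr cc]; exact key3 _ _
  · have hpv : part3 ∘ ![u0, u1, u2] = id := by
      funext i; fin_cases i <;> rfl
    have hvi : Injective ![u0, u1, u2] := by
      have : Injective (part3 ∘ ![u0, u1, u2]) := by rw [hpv]; exact injective_id
      exact Injective.of_comp this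
    have h := he ![u0, u1, u2] ![u0, u1, u2] hvi hvi
    have hdet : ((evalDistTripartite p q r).submatrix ![u0, u1, u2] ![u0, u1, u2]).det = 4 := by
      rw [hsub, hpv]
      simpa using detAmat
    rwa [hdet] at h
  · obtain ⟨i, j, hij, hpij⟩ :=
      Fintype.exists_ne_map_eq_of_card_lt (part3 ∘ rr) (by simp)
    refine Matrix.det_zero_of_row_eq hij ?_
    funext k
    show Amat (part3 (rr i)) (part3 (cc k)) = Amat (part3 (rr j)) (part3 (cc k))
    simp only [Function.comp] at hpij
    rw [hpij]
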